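/- arXiv:2411.11682 — 2 statements merged into one kernel-verified Lean document; each statement's English description precedes it below -/
import Mathlib

section
/- Let m, T, S be positive natural numbers. Given any F̃ ∈ (ℝ^{T+1})^m and any Ẽ ∈ (ℝ^S)^{m×m}, the pair (F̂, Ê) minimizing the squared Euclidean (Frobenius) distance ‖F − F̃‖² + ‖E − Ẽ‖² over the relaxed graph space 𝒢̄ exists, is unique, and is given coordinatewise by: for every i ∈ {1,…,m}, F̂_i = P_{Δ^T}(F̃_i), the metric projection of F̃_i onto the standard simplex Δ^T ⊆ ℝ^{T+1}; and for every pair (i,j), Ê_{i,j} = Ê_{j,i} = P_{Δ^{S−1}}((Ẽ_{i,j} + Ẽ_{j,i})/2), the metric projection of the average (Ẽ_{i,j} + Ẽ_{j,i})/2 onto the standard simplex Δ^{S−1} ⊆ ℝ^S. -/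
/-- The standard simplex `Δ^{k-1}` viewed inside the Euclidean space `ℝ^k`. -/
def euclSimplex (k : ℕ) : Set (EuclideanSpace ℝ (Fin k)) :=
  {a | (∀ i, 0 ≤ a i) ∧ ∑ i, a i = 1}

/-- `p` is a metric projection of `x` onto `C`: `p` belongs to `C` and is
closest to `x` among all points of `C` (Euclidean norm). -/
def IsMetricProjOn {E : Type*} [NormedAddCommGroup E] (C : Set E) (x p : E) : Prop :=
  p ∈ C ∧ ∀ q ∈ C, ‖x - p‖ ≤ ‖x - q‖

/-- The relaxed graph space `𝒢̄` for `m` nodes, `T+1` node labels and `S` edge labels: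
each node feature lies in the simplex `Δ^T ⊆ ℝ^{T+1}`, each edge feature lies in the simplex
`Δ^{S-1} ⊆ ℝ^S` and the edge features are symmetric. -/
def RelaxedGraphSpace (m T S : ℕ) :
    Set ((Fin m → EuclideanSpace ℝ (Fin (T + 1))) ×
      (Fin m → Fin m → EuclideanSpace ℝ (Fin S))) :=
  {p | (∀ i, p.1 i ∈ euclSimplex (T + 1)) ∧ (∀ i j, p.2 i j ∈ euclSimplex S) ∧
    ∀ i j, p.2 i j = p.2 j i}

/-- The squared Frobenius distance `‖F − F̃‖² + ‖E − Ẽ‖²`. -/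
noncomputable def graphSqDist (m T S : ℕ)
    (Ft : Fin m → EuclideanSpace ℝ (Fin (T + 1)))
    (Et : Fin m → Fin m → EuclideanSpace ℝ (Fin S))
    (p : (Fin m → EuclideanSpace ℝ (Fin (T + 1))) ×
      (Fin m → Fin m → EuclideanSpace ℝ (Fin S))) : ℝ :=
  (∑ i, ‖p.1 i - Ft i‖ ^ 2) + ∑ i, ∑ j, ‖p.2 i j - Et i j‖ ^ 2

lemma key_identity {E : Type*} [NormedAddCommGroup E] [InnerProductSpace ℝ E] (v a b : E) :
    ‖v - a‖^2 + ‖v - b‖^2 = 2*‖v - midpoint ℝ a b‖^2 + ‖a - b‖^2/2 := by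
  have hmid : midpoint ℝ a b = (1/2 : ℝ) • (a + b) := by
    rw [midpoint_eq_smul_add]; norm_num
  have h1 : v - a = (v - midpoint ℝ a b) + (1/2 : ℝ) • (b - a) := by
    rw [hmid]; module
  have h2 : v - b = (v - midpoint ℝ a b) - (1/2 : ℝ) • (b - a) := by
    rw [hmid]; module
  have hp := parallelogram_law_with_norm ℝ (v - midpoint ℝ a b) ((1/2 : ℝ) • (b - a))
  have hn : ‖(1/2 : ℝ) • (b - a)‖ = ‖a - b‖ / 2 := by
    rw [norm_smul, norm_sub_rev a b]; simp; ring
  rw [h1, h2]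
  nlinarith [hp, hn, norm_nonneg (a - b)]

lemma euclSimplex_nonempty {k : ℕ} (hk : 0 < k) : (euclSimplex k).Nonempty := by
  refine ⟨WithLp.toLp 2 (fun _ => (k : ℝ)⁻¹), fun i => by show (0:ℝ) ≤ (k:ℝ)⁻¹; positivity, ?_⟩
  have : ∑ _i : Fin k, (k : ℝ)⁻¹ = k * (k : ℝ)⁻¹ := by
    simp [Finset.sum_const, Finset.card_fin]
  show ∑ _i : Fin k, (k : ℝ)⁻¹ = 1
  rw [this, mul_inv_cancel₀]
  exact Nat.cast_ne_zero.mpr hk.ne'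

lemma isClosed_euclSimplex (k : ℕ) : IsClosed (euclSimplex k) := by
  have hc : ∀ i : Fin k, Continuous fun a : EuclideanSpace ℝ (Fin k) => a i :=
    fun i => (EuclideanSpace.proj i).continuous
  have : euclSimplex k = (⋂ i, {a : EuclideanSpace ℝ (Fin k) | 0 ≤ a i}) ∩
      {a : EuclideanSpace ℝ (Fin k) | ∑ i, a i = 1} := by
    ext a; simp [euclSimplex, Set.mem_iInter]
  rw [this]
  exact (isClosed_iInter fun i => isClosed_le continuous_const (hc i)).inter
    (isClosed_eq (by exact continuous_finset_sum _ fun i _ => hc i) continuous_const)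

lemma convex_euclSimplex (k : ℕ) : Convex ℝ (euclSimplex k) := by
  intro a ha b hb s t hs ht hst
  have happ : ∀ i, (s • a + t • b) i = s * a i + t * b i := fun i => rfl
  constructor
  · intro i
    rw [happ]
    exact add_nonneg (mul_nonneg hs (ha.1 i)) (mul_nonneg ht (hb.1 i))
  · simp_rw [happ, Finset.sum_add_distrib, ← Finset.mul_sum, ha.2, hb.2]
    linarith

lemma existsUnique_proj {k : ℕ} (hk : 0 < k) (x : EuclideanSpace ℝ (Fin k)) :
    ∃! p, IsMetricProjOn (euclSimplex k) x p := by
  obtain ⟨v, hv, hvd⟩ := exists_norm_eq_iInf_of_complete_convex (euclSimplex_nonempty hk)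
    ((isClosed_euclSimplex k).isComplete) (convex_euclSimplex k) x
  have hmin : ∀ q ∈ euclSimplex k, ‖x - v‖ ≤ ‖x - q‖ := by
    intro q hq
    rw [hvd]
    exact ciInf_le ⟨0, by rintro r ⟨w, rfl⟩; exact norm_nonneg _⟩ (⟨q, hq⟩ : euclSimplex k)
  refine ⟨v, ⟨hv, hmin⟩, ?_⟩
  rintro p ⟨hp, hpmin⟩
  have hmem : midpoint ℝ p v ∈ euclSimplex k := by
    have h := (convex_euclSimplex k) hp hv (by norm_num : (0:ℝ) ≤ 1/2)
      (by norm_num : (0:ℝ) ≤ 1/2) (by norm_num)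
    have he : midpoint ℝ p v = (1/2:ℝ) • p + (1/2:ℝ) • v := by
      rw [midpoint_eq_smul_add, smul_add]; norm_num
    rwa [he]
  have h1 : ‖x - p‖ = ‖x - v‖ := le_antisymm (hpmin v hv) (hmin p hp)
  have hk1 := key_identity x p v
  have h2 : ‖x - p‖ ≤ ‖x - midpoint ℝ p v‖ := hpmin _ hmem
  have h3 : ‖p - v‖ = 0 := by
    nlinarith [norm_nonneg (p - v), norm_nonneg (x - p), norm_nonneg (x - midpoint ℝ p v)]
  rw [norm_eq_zero, sub_eq_zero] at h3
  exact h3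

lemma sq_eq_of_nonneg {a b : ℝ} (ha : 0 ≤ a) (hb : 0 ≤ b) (h : a^2 = b^2) : a = b :=
  le_antisymm (by nlinarith) (by nlinarith)

lemma edge_decomp {m S : ℕ} (Et E' : Fin m → Fin m → EuclideanSpace ℝ (Fin S))
    (hsym : ∀ i j, E' i j = E' j i) :
    ∑ i, ∑ j, ‖E' i j - Et i j‖^2
      = (∑ i, ∑ j, ‖E' i j - midpoint ℝ (Et i j) (Et j i)‖^2)
        + (∑ i, ∑ j, ‖Et i j - Et j i‖^2) / 4 := by
  have hswap : ∑ i, ∑ j, ‖E' i j - Et i j‖^2 = ∑ i, ∑ j, ‖E' i j - Et j i‖^2 := by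
    rw [Finset.sum_comm]
    exact Finset.sum_congr rfl fun i _ => Finset.sum_congr rfl fun j _ => by rw [hsym _ _]
  have h2 : ∑ i, ∑ j, (‖E' i j - Et i j‖^2 + ‖E' i j - Et j i‖^2)
      = ∑ i, ∑ j, (2*‖E' i j - midpoint ℝ (Et i j) (Et j i)‖^2 + ‖Et i j - Et j i‖^2/2) :=
    Finset.sum_congr rfl fun i _ => Finset.sum_congr rfl fun j _ => key_identity _ _ _
  simp_rw [Finset.sum_add_distrib, ← Finset.mul_sum, ← Finset.sum_div] at h2
  linarith

/-- Given `F̃ ∈ (ℝ^{T+1})^m` and `Ẽ ∈ (ℝ^S)^{m×m}`, the minimizer of the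
squared Frobenius distance to `(F̃, Ẽ)` over the relaxed graph space `𝒢̄` exists, is unique,
and is given coordinatewise by `F̂ᵢ = P_{Δ^T}(F̃ᵢ)` and
`Ê_{i,j} = Ê_{j,i} = P_{Δ^{S−1}}((Ẽ_{i,j} + Ẽ_{j,i})/2)`. -/
theorem stmt_0 (m T S : ℕ) (hm : 0 < m) (hT : 0 < T) (hS : 0 < S)
    (Ft : Fin m → EuclideanSpace ℝ (Fin (T + 1)))
    (Et : Fin m → Fin m → EuclideanSpace ℝ (Fin S)) :
    (∃! p, p ∈ RelaxedGraphSpace m T S ∧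
        ∀ q ∈ RelaxedGraphSpace m T S, graphSqDist m T S Ft Et p ≤ graphSqDist m T S Ft Et q) ∧
    ∀ p, (p ∈ RelaxedGraphSpace m T S ∧
        ∀ q ∈ RelaxedGraphSpace m T S, graphSqDist m T S Ft Et p ≤ graphSqDist m T S Ft Et q) →
      (∀ i, IsMetricProjOn (euclSimplex (T + 1)) (Ft i) (p.1 i)) ∧
      (∀ i j, p.2 i j = p.2 j i ∧
        IsMetricProjOn (euclSimplex S) (midpoint ℝ (Et i j) (Et j i)) (p.2 i j)) := by
  have hFex : ∀ i, ∃! p, IsMetricProjOn (euclSimplex (T + 1)) (Ft i) p :=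
    fun i => existsUnique_proj (Nat.succ_pos T) (Ft i)
  choose PF hPF hPFu using hFex
  have hEex : ∀ i j, ∃! p, IsMetricProjOn (euclSimplex S) (midpoint ℝ (Et i j) (Et j i)) p :=
    fun i j => existsUnique_proj hS _
  choose PE hPE hPEu using hEex
  have hPEsym : ∀ i j, PE i j = PE j i := by
    intro i j
    refine (hPEu i j (PE j i) ?_).symm
    have h := hPE j i
    rwa [midpoint_comm] at h
  have hmem : (PF, PE) ∈ RelaxedGraphSpace m T S :=
    ⟨fun i => (hPF i).1, fun i j => (hPE i j).1, hPEsym⟩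
  have hFle : ∀ (q : (Fin m → EuclideanSpace ℝ (Fin (T + 1))) ×
      (Fin m → Fin m → EuclideanSpace ℝ (Fin S))) (_ : q ∈ RelaxedGraphSpace m T S) (i : Fin m),
      ‖PF i - Ft i‖^2 ≤ ‖q.1 i - Ft i‖^2 := by
    intro q hq i
    have h := (hPF i).2 (q.1 i) (hq.1 i)
    rw [norm_sub_rev (Ft i), norm_sub_rev (Ft i)] at h
    exact pow_le_pow_left₀ (norm_nonneg _) h 2
  have hEle : ∀ (q : (Fin m → EuclideanSpace ℝ (Fin (T + 1))) ×
      (Fin m → Fin m → EuclideanSpace ℝ (Fin S))) (_ : q ∈ RelaxedGraphSpace m T S) (i j : Fin m),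
      ‖PE i j - midpoint ℝ (Et i j) (Et j i)‖^2
        ≤ ‖q.2 i j - midpoint ℝ (Et i j) (Et j i)‖^2 := by
    intro q hq i j
    have h := (hPE i j).2 (q.2 i j) (hq.2.1 i j)
    rw [norm_sub_rev (midpoint ℝ (Et i j) (Et j i)),
      norm_sub_rev (midpoint ℝ (Et i j) (Et j i))] at h
    exact pow_le_pow_left₀ (norm_nonneg _) h 2
  have hdecomp : ∀ (q : (Fin m → EuclideanSpace ℝ (Fin (T + 1))) ×
      (Fin m → Fin m → EuclideanSpace ℝ (Fin S))) (_ : q ∈ RelaxedGraphSpace m T S),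
      graphSqDist m T S Ft Et q = (∑ i, ‖q.1 i - Ft i‖^2)
        + ((∑ i, ∑ j, ‖q.2 i j - midpoint ℝ (Et i j) (Et j i)‖^2)
          + (∑ i, ∑ j, ‖Et i j - Et j i‖^2) / 4) := by
    intro q hq
    rw [graphSqDist, edge_decomp Et q.2 hq.2.2]
  have hmin : ∀ q ∈ RelaxedGraphSpace m T S,
      graphSqDist m T S Ft Et (PF, PE) ≤ graphSqDist m T S Ft Et q := by
    intro q hq
    rw [hdecomp (PF, PE) hmem, hdecomp q hq]
    have h1 : ∑ i, ‖PF i - Ft i‖^2 ≤ ∑ i, ‖q.1 i - Ft i‖^2 :=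
      Finset.sum_le_sum fun i _ => hFle q hq i
    have h2 : ∑ i, ∑ j, ‖PE i j - midpoint ℝ (Et i j) (Et j i)‖^2
        ≤ ∑ i, ∑ j, ‖q.2 i j - midpoint ℝ (Et i j) (Et j i)‖^2 :=
      Finset.sum_le_sum fun i _ => Finset.sum_le_sum fun j _ => hEle q hq i j
    exact add_le_add h1 (add_le_add_left h2 _)
  have huniq : ∀ p, (p ∈ RelaxedGraphSpace m T S ∧
      ∀ q ∈ RelaxedGraphSpace m T S,
        graphSqDist m T S Ft Et p ≤ graphSqDist m T S Ft Et q) →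
      (∀ i, p.1 i = PF i) ∧ (∀ i j, p.2 i j = PE i j) := by
    rintro p ⟨hpmem, hpmin⟩
    have heq : graphSqDist m T S Ft Et p = graphSqDist m T S Ft Et (PF, PE) :=
      le_antisymm (hpmin (PF, PE) hmem) (hmin p hpmem)
    rw [hdecomp p hpmem, hdecomp (PF, PE) hmem] at heq
    have h1 : ∑ i, ‖PF i - Ft i‖^2 ≤ ∑ i, ‖p.1 i - Ft i‖^2 :=
      Finset.sum_le_sum fun i _ => hFle p hpmem i
    have h2 : ∑ i, ∑ j, ‖PE i j - midpoint ℝ (Et i j) (Et j i)‖^2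
        ≤ ∑ i, ∑ j, ‖p.2 i j - midpoint ℝ (Et i j) (Et j i)‖^2 :=
      Finset.sum_le_sum fun i _ => Finset.sum_le_sum fun j _ => hEle p hpmem i j
    have hA : ∑ i, ‖PF i - Ft i‖^2 = ∑ i, ‖p.1 i - Ft i‖^2 := by linarith
    have hB : ∑ i, ∑ j, ‖PE i j - midpoint ℝ (Et i j) (Et j i)‖^2
        = ∑ i, ∑ j, ‖p.2 i j - midpoint ℝ (Et i j) (Et j i)‖^2 := by linarith
    have hAterm := (Finset.sum_eq_sum_iff_of_le (fun i _ => hFle p hpmem i)).mp hA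
    have hBsum := (Finset.sum_eq_sum_iff_of_le
      (fun i _ => Finset.sum_le_sum fun j _ => hEle p hpmem i j)).mp hB
    constructor
    · intro i
      have hsq := (hAterm i (Finset.mem_univ i)).symm
      have hn : ‖Ft i - p.1 i‖ = ‖Ft i - PF i‖ := by
        rw [norm_sub_rev (Ft i), norm_sub_rev (Ft i)]
        exact sq_eq_of_nonneg (norm_nonneg _) (norm_nonneg _) hsq
      exact hPFu i (p.1 i) ⟨hpmem.1 i, fun c hc => hn ▸ (hPF i).2 c hc⟩
    · intro i j
      have hBterm := (Finset.sum_eq_sum_iff_of_le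
        (fun j _ => hEle p hpmem i j)).mp (hBsum i (Finset.mem_univ i))
      have hsq := (hBterm j (Finset.mem_univ j)).symm
      have hn : ‖midpoint ℝ (Et i j) (Et j i) - p.2 i j‖
          = ‖midpoint ℝ (Et i j) (Et j i) - PE i j‖ := by
        rw [norm_sub_rev (midpoint ℝ (Et i j) (Et j i)),
          norm_sub_rev (midpoint ℝ (Et i j) (Et j i))]
        exact sq_eq_of_nonneg (norm_nonneg _) (norm_nonneg _) hsq
      exact hPEu i j (p.2 i j) ⟨hpmem.2.1 i j, fun c hc => hn ▸ (hPE i j).2 c hc⟩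
  constructor
  · refine ⟨(PF, PE), ⟨hmem, hmin⟩, ?_⟩
    intro p hp
    obtain ⟨h1, h2⟩ := huniq p hp
    exact Prod.ext (funext h1) (funext fun i => funext fun j => h2 i j)
  · intro p hp
    obtain ⟨h1, h2⟩ := huniq p hp
    refine ⟨fun i => ?_, fun i j => ⟨?_, ?_⟩⟩
    · rw [h1 i]; exact hPF i
    · rw [h2 i j, h2 j i]; exact hPEsym i j
    · rw [h2 i j]; exact hPE i j
end

section
/- Let m, S be positive natural numbers and let 𝒮 ⊆ (ℝ^S)^{m×m} be the set of arrays E with each entry E_{i,j} lying in the standard simplex Δ^{S−1} ⊆ ℝ^S and satisfying E_{i,j} = E_{j,i} for all i, j. Then for any Ẽ ∈ (ℝ^S)^{m×m}, the minimizer Ê of ‖E − Ẽ‖² = Σ_{i,j} ‖E_{i,j} − Ẽ_{i,j}‖² over 𝒮 exists, is unique, and satisfies Ê_{i,j} = Ê_{j,i} = P_{Δ^{S−1}}((Ẽ_{i,j} + Ẽ_{j,i})/2) for every pair (i,j), where P_{Δ^{S−1}} is the metric projection onto the simplex. -/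
/-- The set `𝒮` of symmetric arrays `E ∈ (ℝ^S)^{m×m}` whose entries lie in the simplex. -/
def SymSimplexArrays (m S : ℕ) : Set (Fin m → Fin m → EuclideanSpace ℝ (Fin S)) :=
  {E | (∀ i j, E i j ∈ euclSimplex S) ∧ ∀ i j, E i j = E j i}

theorem metricProj_existsUnique {F : Type*} [NormedAddCommGroup F] [InnerProductSpace ℝ F]
    {K : Set F} (ne : K.Nonempty) (hc : IsComplete K) (hconv : Convex ℝ K) (x : F) :
    ∃! p, IsMetricProjOn K x p := by
  obtain ⟨v, hv, hve⟩ := exists_norm_eq_iInf_of_complete_convex ne hc hconv x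
  have bdd : BddBelow (Set.range fun w : K => ‖x - w‖) :=
    ⟨0, Set.forall_mem_range.2 fun _ => norm_nonneg _⟩
  have hmin : ∀ q ∈ K, ‖x - v‖ ≤ ‖x - q‖ := fun q hq => hve ▸ ciInf_le bdd ⟨q, hq⟩
  refine ⟨v, ⟨hv, hmin⟩, fun p hp => ?_⟩
  have hpe : ‖x - p‖ = ⨅ w : K, ‖x - w‖ := by
    haveI : Nonempty K := ne.to_subtype
    exact le_antisymm (le_ciInf fun w => hp.2 w w.2) (ciInf_le bdd ⟨p, hp.1⟩)
  have h1 := (norm_eq_iInf_iff_real_inner_le_zero hconv hp.1).1 hpe v hv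
  have h2 := (norm_eq_iInf_iff_real_inner_le_zero hconv hv).1 hve p hp.1
  have key : ‖v - p‖ ^ 2 ≤ 0 := by
    have : (inner ℝ (x - p) (v - p) : ℝ) + (inner ℝ (x - v) (p - v) : ℝ) = ‖v - p‖ ^ 2 := by
      simp only [inner_sub_left, inner_sub_right]
      rw [norm_sub_sq_real, real_inner_comm p v, real_inner_self_eq_norm_sq v,
        real_inner_self_eq_norm_sq p]
      ring
    linarith
  have h0 : v - p = 0 := by
    have := norm_nonneg (v - p)
    have : ‖v - p‖ = 0 := by nlinarith
    exact norm_eq_zero.1 this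
  exact (eq_of_sub_eq_zero h0).symm

theorem par_identity {F : Type*} [NormedAddCommGroup F] [InnerProductSpace ℝ F] (e a b : F) :
    ‖e - a‖ ^ 2 + ‖e - b‖ ^ 2 = 2 * ‖e - midpoint ℝ a b‖ ^ 2 + ‖a - b‖ ^ 2 / 2 := by
  have hx : (e - midpoint ℝ a b) + (2:ℝ)⁻¹ • (a - b) = e - b := by
    rw [midpoint_eq_smul_add, invOf_eq_inv]; module
  have hy : (e - midpoint ℝ a b) - (2:ℝ)⁻¹ • (a - b) = e - a := by
    rw [midpoint_eq_smul_add, invOf_eq_inv]; module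
  have hp := parallelogram_law_with_norm ℝ (e - midpoint ℝ a b) ((2:ℝ)⁻¹ • (a - b))
  rw [hx, hy] at hp
  have hn : ‖(2:ℝ)⁻¹ • (a - b)‖ = 2⁻¹ * ‖a - b‖ := by rw [norm_smul]; simp
  rw [hn] at hp
  linear_combination hp

/-- For any `Ẽ ∈ (ℝ^S)^{m×m}`, the minimizer `Ê` of
`∑_{i,j} ‖E_{i,j} − Ẽ_{i,j}‖²` over the symmetric simplex-valued arrays `𝒮` exists,
is unique, and satisfies `Ê_{i,j} = Ê_{j,i} = P_{Δ^{S−1}}((Ẽ_{i,j} + Ẽ_{j,i})/2)`. -/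
theorem stmt_3 (m S : ℕ) (hm : 0 < m) (hS : 0 < S)
    (Et : Fin m → Fin m → EuclideanSpace ℝ (Fin S)) :
    (∃! E, E ∈ SymSimplexArrays m S ∧
        ∀ E' ∈ SymSimplexArrays m S,
          ∑ i, ∑ j, ‖E i j - Et i j‖ ^ 2 ≤ ∑ i, ∑ j, ‖E' i j - Et i j‖ ^ 2) ∧
    ∀ E, (E ∈ SymSimplexArrays m S ∧
        ∀ E' ∈ SymSimplexArrays m S,
          ∑ i, ∑ j, ‖E i j - Et i j‖ ^ 2 ≤ ∑ i, ∑ j, ‖E' i j - Et i j‖ ^ 2) →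
      ∀ i j, E i j = E j i ∧
        IsMetricProjOn (euclSimplex S) (midpoint ℝ (Et i j) (Et j i)) (E i j) := by
  -- basic facts about the simplex
  have hconv : Convex ℝ (euclSimplex S) := by
    intro a ha b hb s t hs ht hst
    refine ⟨fun i => ?_, ?_⟩
    · simp only [PiLp.add_apply, PiLp.smul_apply, smul_eq_mul]
      exact add_nonneg (mul_nonneg hs (ha.1 i)) (mul_nonneg ht (hb.1 i))
    · simp only [PiLp.add_apply, PiLp.smul_apply, smul_eq_mul, Finset.sum_add_distrib,
        ← Finset.mul_sum, ha.2, hb.2]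
      linarith
  have hclosed : IsClosed (euclSimplex S) := (isClosed_stdSimplex ℝ (Fin S)).preimage
    (PiLp.continuous_ofLp (p := 2) (β := fun _ : Fin S => ℝ))
  have hne : (euclSimplex S).Nonempty :=
    ⟨EuclideanSpace.single ⟨0, hS⟩ 1, fun i => by simp [EuclideanSpace.single_apply]; positivity,
      by simp [EuclideanSpace.single_apply]⟩
  have hcomp : IsComplete (euclSimplex S) := hclosed.isComplete
  have hproj : ∀ x, ∃! p, IsMetricProjOn (euclSimplex S) x p := fun x =>
    metricProj_existsUnique hne hcomp hconv x
  choose P hP hPu using hproj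
  -- the midpoint array
  set mid : Fin m → Fin m → EuclideanSpace ℝ (Fin S) :=
    fun i j => midpoint ℝ (Et i j) (Et j i) with hmid
  have hmid_symm : ∀ i j, mid i j = mid j i := fun i j => midpoint_comm _ _
  -- the candidate minimizer
  set Ehat : Fin m → Fin m → EuclideanSpace ℝ (Fin S) := fun i j => P (mid i j) with hEhat
  have hEhat_symm : ∀ i j, Ehat i j = Ehat j i := fun i j => by
    simp only [hEhat]; rw [hmid_symm i j]
  have hEhat_mem : Ehat ∈ SymSimplexArrays m S :=
    ⟨fun i j => (hP (mid i j)).1, hEhat_symm⟩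
  -- key sum identity
  have key : ∀ E : Fin m → Fin m → EuclideanSpace ℝ (Fin S), (∀ i j, E i j = E j i) →
      ∑ i, ∑ j, ‖E i j - Et i j‖ ^ 2
        = ∑ i, ∑ j, ‖E i j - mid i j‖ ^ 2 + (∑ i, ∑ j, ‖Et i j - Et j i‖ ^ 2) / 4 := by
    intro E hsym
    have hswap : ∑ i, ∑ j, ‖E i j - Et j i‖ ^ 2 = ∑ i, ∑ j, ‖E i j - Et i j‖ ^ 2 := by
      rw [Finset.sum_comm]
      exact Finset.sum_congr rfl fun i _ => Finset.sum_congr rfl fun j _ => by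
        rw [← hsym i j]
    have hc : (2:ℝ) * ∑ i, ∑ j, ‖E i j - Et i j‖ ^ 2
        = 2 * ∑ i, ∑ j, ‖E i j - mid i j‖ ^ 2 + (∑ i, ∑ j, ‖Et i j - Et j i‖ ^ 2) / 2 := by
      calc (2:ℝ) * ∑ i, ∑ j, ‖E i j - Et i j‖ ^ 2
          = ∑ i, ∑ j, (‖E i j - Et i j‖ ^ 2 + ‖E i j - Et j i‖ ^ 2) := by
            simp only [Finset.sum_add_distrib]; rw [hswap]; ring
        _ = ∑ i, ∑ j, (2 * ‖E i j - mid i j‖ ^ 2 + ‖Et i j - Et j i‖ ^ 2 / 2) :=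
            Finset.sum_congr rfl fun i _ => Finset.sum_congr rfl fun j _ =>
              par_identity _ _ _
        _ = 2 * ∑ i, ∑ j, ‖E i j - mid i j‖ ^ 2
              + (∑ i, ∑ j, ‖Et i j - Et j i‖ ^ 2) / 2 := by
            simp only [Finset.sum_add_distrib, ← Finset.mul_sum, ← Finset.sum_div]
    linarith
  -- Ehat is a minimizer
  have hmin : ∀ E' ∈ SymSimplexArrays m S,
      ∑ i, ∑ j, ‖Ehat i j - Et i j‖ ^ 2 ≤ ∑ i, ∑ j, ‖E' i j - Et i j‖ ^ 2 := by
    intro E' hE'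
    rw [key Ehat hEhat_symm, key E' hE'.2]
    have : ∑ i, ∑ j, ‖Ehat i j - mid i j‖ ^ 2 ≤ ∑ i, ∑ j, ‖E' i j - mid i j‖ ^ 2 := by
      refine Finset.sum_le_sum fun i _ => Finset.sum_le_sum fun j _ => ?_
      have h1 : ‖mid i j - Ehat i j‖ ≤ ‖mid i j - E' i j‖ :=
        (hP (mid i j)).2 _ (hE'.1 i j)
      rw [norm_sub_rev (mid i j), norm_sub_rev (mid i j)] at h1
      exact pow_le_pow_left₀ (norm_nonneg _) h1 2
    linarith
  -- any minimizer equals Ehat pointwise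
  have hchar : ∀ E, (E ∈ SymSimplexArrays m S ∧
      ∀ E' ∈ SymSimplexArrays m S,
        ∑ i, ∑ j, ‖E i j - Et i j‖ ^ 2 ≤ ∑ i, ∑ j, ‖E' i j - Et i j‖ ^ 2) →
      ∀ i j, E i j = Ehat i j := by
    intro E ⟨hEmem, hEmin⟩
    have hle : ∑ i, ∑ j, ‖E i j - mid i j‖ ^ 2 ≤ ∑ i, ∑ j, ‖Ehat i j - mid i j‖ ^ 2 := by
      have := hEmin Ehat hEhat_mem
      rw [key E hEmem.2, key Ehat hEhat_symm] at this
      linarith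
    have hterm : ∀ i j, ‖Ehat i j - mid i j‖ ^ 2 ≤ ‖E i j - mid i j‖ ^ 2 := by
      intro i j
      have h1 : ‖mid i j - Ehat i j‖ ≤ ‖mid i j - E i j‖ :=
        (hP (mid i j)).2 _ (hEmem.1 i j)
      rw [norm_sub_rev (mid i j), norm_sub_rev (mid i j)] at h1
      exact pow_le_pow_left₀ (norm_nonneg _) h1 2
    have hinner_le : ∀ i, ∑ j, ‖Ehat i j - mid i j‖ ^ 2 ≤ ∑ j, ‖E i j - mid i j‖ ^ 2 :=
      fun i => Finset.sum_le_sum fun j _ => hterm i j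
    have houter : ∑ i, ∑ j, ‖E i j - mid i j‖ ^ 2 = ∑ i, ∑ j, ‖Ehat i j - mid i j‖ ^ 2 :=
      le_antisymm hle (Finset.sum_le_sum fun i _ => hinner_le i)
    have hrow : ∀ i ∈ Finset.univ, (∑ j, ‖Ehat i j - mid i j‖ ^ 2) = ∑ j, ‖E i j - mid i j‖ ^ 2 :=
      (Finset.sum_eq_sum_iff_of_le fun i _ => hinner_le i).1 houter.symm
    intro i j
    have hent : ‖Ehat i j - mid i j‖ ^ 2 = ‖E i j - mid i j‖ ^ 2 :=
      (Finset.sum_eq_sum_iff_of_le fun j _ => hterm i j).1 (hrow i (Finset.mem_univ i)) j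
        (Finset.mem_univ j)
    have hnorm : ‖mid i j - E i j‖ = ‖mid i j - Ehat i j‖ := by
      rw [norm_sub_rev (mid i j), norm_sub_rev (mid i j) (Ehat i j)]
      nlinarith [norm_nonneg (E i j - mid i j), norm_nonneg (Ehat i j - mid i j)]
    have : IsMetricProjOn (euclSimplex S) (mid i j) (E i j) :=
      ⟨hEmem.1 i j, fun q hq => hnorm ▸ (hP (mid i j)).2 q hq⟩
    exact hPu (mid i j) _ this
  constructor
  · refine ⟨Ehat, ⟨hEhat_mem, hmin⟩, fun E hE => ?_⟩
    funext i j
    exact hchar E hE i j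
  · intro E hE i j
    refine ⟨hE.1.2 i j, ?_⟩
    have h := hchar E hE i j
    rw [h]
    exact hP (mid i j)
end
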